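/- There is a computable enumeration ⟨A_s⟩ of ℕ in which each A_s is an initial segment of ℕ (enumerating 0,1,2,... in order), such that the total cost of ⟨A_s⟩ with respect to the standard cost function c_K is infinite. -/

import Mathlib

/-- Real-valued stage cost: cost of the change from stage `s-1` to stage `s`. -/
noncomputable def stageCostR (c : ℕ → ℕ → ℝ) (A : ℕ → ℕ → Bool) (s : ℕ) : ℝ :=
  if h : ∃ x, x < s ∧ A (s - 1) x ≠ A s x then c (Nat.find h) s else 0

/-- The standard cost function `c_K(x,s) = Σ_{w=x+1}^{s} 2^{-K_s(w)}`, where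
`K s w` is the stage-`s` prefix-free complexity of `w` (with the convention
`K_s(w) = ∞`, i.e. weight `0`, for `w ≥ s`). -/
noncomputable def cKs (K : ℕ → ℕ → ℕ) (x s : ℕ) : ℝ :=
  ∑ w ∈ Finset.Ico (x + 1) s, ((2 : ℝ)⁻¹) ^ K s w

namespace Stmt5Aux

lemma sq_le_two_pow : ∀ s : ℕ, (s+1)*(s+1) ≤ 2^(s+2)
  | 0 => by norm_num
  | 1 => by norm_num
  | 2 => by norm_num
  | (n+3) => by
      have ih := sq_le_two_pow (n+2)
      have h2 : (2:ℕ)^(n+3+2) = 2 * 2^(n+2+2) := by ring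
      nlinarith

lemma log_le_sqrt_succ (j : ℕ) : Nat.log 2 j ≤ Nat.sqrt j + 1 := by
  rcases Nat.eq_zero_or_pos j with h | h
  · simp [h]
  by_contra hcon
  push_neg at hcon
  have h1 : 2 ^ (Nat.sqrt j + 2) ≤ 2 ^ (Nat.log 2 j) := Nat.pow_le_pow_right (by norm_num) hcon
  have h2 : 2 ^ (Nat.log 2 j) ≤ j := Nat.pow_log_le_self 2 h.ne'
  have h3 : j < (Nat.sqrt j + 1) ^ 2 := Nat.lt_succ_sqrt' j
  have h4 := sq_le_two_pow (Nat.sqrt j)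
  have : j < 2 ^ (Nat.sqrt j + 2) := by
    calc j < (Nat.sqrt j + 1)^2 := h3
    _ = (Nat.sqrt j + 1) * (Nat.sqrt j + 1) := by ring
    _ ≤ 2 ^ (Nat.sqrt j + 2) := h4
  omega

/-- One step of the enumeration machine.  The state is `(m, j, e)` where `m`
is the number of elements enumerated so far, `j = Nat.size m` and `e = 2 ^ j`. -/
def stepP (K : ℕ → ℕ → ℕ) (C : ℕ) (q : ℕ × (ℕ × ℕ × ℕ)) : ℕ × ℕ × ℕ :=
  cond (decide (q.2.2.2 < q.1 + 1))
    (cond (decide (K (q.1 + 1) q.2.2.2 ≤ 2 * (Nat.sqrt q.2.2.1 + 1) + C))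
      (q.2.1 + 1, cond (decide (q.2.2.2 ≤ q.2.1 + 1)) (q.2.2.1 + 1, 2 * q.2.2.2) q.2.2)
      q.2)
    q.2

def enumP (K : ℕ → ℕ → ℕ) (C : ℕ) (s : ℕ) : ℕ × ℕ × ℕ :=
  Nat.rec (motive := fun _ => ℕ × ℕ × ℕ) (0, 0, 1) (fun y IH => stepP K C (y, IH)) s

def nF (K : ℕ → ℕ → ℕ) (C : ℕ) (s : ℕ) : ℕ := (enumP K C s).1

theorem enumP_computable (K : ℕ → ℕ → ℕ) (C : ℕ) (hK : Computable₂ K) :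
    Computable (enumP K C) := by
  have hlt : Computable₂ fun (a b : ℕ) => decide (a < b) := Primrec.nat_lt.decide.to_comp
  have hle : Computable₂ fun (a b : ℕ) => decide (a ≤ b) := Primrec.nat_le.decide.to_comp
  have hadd : Computable₂ ((· + ·) : ℕ → ℕ → ℕ) := Primrec.nat_add.to_comp
  have hmul : Computable₂ ((· * ·) : ℕ → ℕ → ℕ) := Primrec.nat_mul.to_comp
  have hsqrt : Computable Nat.sqrt := Primrec.nat_sqrt.to_comp
  have hy : Computable fun q : ℕ × (ℕ × ℕ × ℕ) => q.1 := Computable.fst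
  have hm : Computable fun q : ℕ × (ℕ × ℕ × ℕ) => q.2.1 :=
    Computable.fst.comp Computable.snd
  have hj : Computable fun q : ℕ × (ℕ × ℕ × ℕ) => q.2.2.1 :=
    Computable.fst.comp (Computable.snd.comp Computable.snd)
  have he : Computable fun q : ℕ × (ℕ × ℕ × ℕ) => q.2.2.2 :=
    Computable.snd.comp (Computable.snd.comp Computable.snd)
  have hy1 : Computable fun q : ℕ × (ℕ × ℕ × ℕ) => q.1 + 1 := Computable.succ.comp hy
  have hm1 : Computable fun q : ℕ × (ℕ × ℕ × ℕ) => q.2.1 + 1 := Computable.succ.comp hm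
  have hc1 : Computable fun q : ℕ × (ℕ × ℕ × ℕ) => decide (q.2.2.2 < q.1 + 1) :=
    hlt.comp he hy1
  have hKv : Computable fun q : ℕ × (ℕ × ℕ × ℕ) => K (q.1 + 1) q.2.2.2 := hK.comp hy1 he
  have hthr : Computable fun q : ℕ × (ℕ × ℕ × ℕ) => 2 * (Nat.sqrt q.2.2.1 + 1) + C :=
    hadd.comp (hmul.comp (Computable.const 2) (Computable.succ.comp (hsqrt.comp hj)))
      (Computable.const C)
  have hc2 : Computable fun q : ℕ × (ℕ × ℕ × ℕ) =>
      decide (K (q.1 + 1) q.2.2.2 ≤ 2 * (Nat.sqrt q.2.2.1 + 1) + C) := hle.comp hKv hthr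
  have hc3 : Computable fun q : ℕ × (ℕ × ℕ × ℕ) => decide (q.2.2.2 ≤ q.2.1 + 1) :=
    hle.comp he hm1
  have hp2 : Computable fun q : ℕ × (ℕ × ℕ × ℕ) => q.2 := Computable.snd
  have hp22 : Computable fun q : ℕ × (ℕ × ℕ × ℕ) => q.2.2 :=
    Computable.snd.comp Computable.snd
  have hinner : Computable fun q : ℕ × (ℕ × ℕ × ℕ) =>
      (cond (decide (q.2.2.2 ≤ q.2.1 + 1)) (q.2.2.1 + 1, 2 * q.2.2.2) q.2.2) :=
    Computable.cond hc3 ((Computable.succ.comp hj).pair (hmul.comp (Computable.const 2) he)) hp22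
  have hstep : Computable (stepP K C) :=
    Computable.cond hc1 (Computable.cond hc2 (hm1.pair hinner) hp2) hp2
  have := Computable.nat_rec (f := fun s : ℕ => s) (g := fun _ : ℕ => ((0, 0, 1) : ℕ × ℕ × ℕ))
    (h := fun _ (p : ℕ × (ℕ × ℕ × ℕ)) => stepP K C p) Computable.id (Computable.const _)
    ((hstep.comp Computable.snd).to₂)
  exact this.of_eq fun s => rfl

variable {K : ℕ → ℕ → ℕ} {C : ℕ}

/-- The firing condition at stage `s+1`. -/
def Cond (K : ℕ → ℕ → ℕ) (C s : ℕ) : Prop :=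
  (enumP K C s).2.2 < s + 1 ∧
    K (s + 1) (enumP K C s).2.2 ≤ 2 * (Nat.sqrt (enumP K C s).2.1 + 1) + C

instance (K : ℕ → ℕ → ℕ) (C s : ℕ) : Decidable (Cond K C s) := by unfold Cond; infer_instance

lemma enumP_succ_of_cond {s : ℕ} (h : Cond K C s) :
    enumP K C (s+1) = ((enumP K C s).1 + 1,
      if (enumP K C s).2.2 ≤ (enumP K C s).1 + 1
      then ((enumP K C s).2.1 + 1, 2 * (enumP K C s).2.2) else (enumP K C s).2) := by
  obtain ⟨h1, h2⟩ := h
  show stepP K C (s, enumP K C s) = _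
  by_cases h3 : (enumP K C s).2.2 ≤ (enumP K C s).1 + 1 <;>
    simp [stepP, h1, h2, h3]

lemma enumP_succ_of_not_cond {s : ℕ} (h : ¬ Cond K C s) : enumP K C (s+1) = enumP K C s := by
  rw [Cond, not_and_or] at h
  show stepP K C (s, enumP K C s) = _
  rcases h with h | h <;> simp [stepP, h]

lemma nF_succ_of_cond {s : ℕ} (h : Cond K C s) : nF K C (s+1) = nF K C s + 1 := by
  show (enumP K C (s+1)).1 = (enumP K C s).1 + 1
  rw [enumP_succ_of_cond h]

lemma nF_succ_of_not_cond {s : ℕ} (h : ¬ Cond K C s) : nF K C (s+1) = nF K C s := by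
  show (enumP K C (s+1)).1 = (enumP K C s).1
  rw [enumP_succ_of_not_cond h]

lemma inv (K : ℕ → ℕ → ℕ) (C : ℕ) : ∀ s : ℕ,
    (enumP K C s).2.1 = Nat.size (enumP K C s).1 ∧
      (enumP K C s).2.2 = 2 ^ Nat.size (enumP K C s).1
  | 0 => by simp [enumP]
  | (s+1) => by
      obtain ⟨hj, he⟩ := inv K C s
      by_cases h : Cond K C s
      · rw [enumP_succ_of_cond h]
        by_cases h3 : (enumP K C s).2.2 ≤ (enumP K C s).1 + 1
        · have hms : (enumP K C s).1 < 2 ^ Nat.size (enumP K C s).1 :=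
            Nat.lt_size_self _
          have heq : (enumP K C s).1 + 1 = 2 ^ Nat.size (enumP K C s).1 := by omega
          have hsz : Nat.size ((enumP K C s).1 + 1) = Nat.size (enumP K C s).1 + 1 := by
            rw [heq, Nat.size_pow]
          rw [if_pos h3]
          refine ⟨by simp [hsz, hj], ?_⟩
          simp only [hsz, he, pow_succ]
          ring
        · have hlt : (enumP K C s).1 + 1 < 2 ^ Nat.size (enumP K C s).1 := by
            rw [← he]; omega
          have hsz : Nat.size ((enumP K C s).1 + 1) = Nat.size (enumP K C s).1 :=
            le_antisymm (Nat.size_le.mpr hlt) (Nat.size_le_size (Nat.le_succ _))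
          rw [if_neg h3]
          exact ⟨by simp [hsz, hj], by simp [hsz, he]⟩
      · rw [enumP_succ_of_not_cond h]; exact ⟨hj, he⟩

lemma nF_mono (K : ℕ → ℕ → ℕ) (C : ℕ) : Monotone (nF K C) := by
  apply monotone_nat_of_le_succ
  intro s
  by_cases h : Cond K C s
  · rw [nF_succ_of_cond h]; omega
  · rw [nF_succ_of_not_cond h]

lemma K_le_of_le (hmono : ∀ s w, w < s → K (s + 1) w ≤ K s w)
    {w s t : ℕ} (hws : w < s) (hst : s ≤ t) : K t w ≤ K s w := by
  induction t, hst using Nat.le_induction with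
  | base => exact le_rfl
  | succ t ht ih => exact le_trans (hmono t w (lt_of_lt_of_le hws ht)) ih

lemma nF_unbounded (hmono : ∀ s w, w < s → K (s + 1) w ≤ K s w)
    (hC : ∀ j, ∃ s, 2 ^ j < s ∧ K s (2 ^ j) ≤ 2 * Nat.log 2 j + C) :
    ∀ M, ∃ s, M ≤ nF K C s := by
  intro M
  induction M with
  | zero => exact ⟨0, Nat.zero_le _⟩
  | succ M ih =>
    obtain ⟨s₀, hs₀⟩ := ih
    by_cases h : ∃ s, M + 1 ≤ nF K C s
    · exact h
    push_neg at h
    have hconst : ∀ s, s₀ ≤ s → nF K C s = M := by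
      intro s hs
      have h1 := h s
      have h2 : nF K C s₀ ≤ nF K C s := nF_mono K C hs
      omega
    obtain ⟨s₁, hs₁, hK₁⟩ := hC (Nat.size M)
    set t := max s₀ s₁ with ht
    have hm : nF K C t = M := hconst t (le_max_left _ _)
    obtain ⟨hj, he⟩ := inv K C t
    have hje : Nat.size (enumP K C t).1 = Nat.size M := by rw [show (enumP K C t).1 = M from hm]
    have hcond : Cond K C t := by
      constructor
      · rw [he, hje]
        have : s₁ ≤ t := le_max_right _ _
        omega
      · rw [he, hj, hje]
        calc K (t + 1) (2 ^ Nat.size M) ≤ K s₁ (2 ^ Nat.size M) :=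
              K_le_of_le hmono hs₁ (by have := le_max_right s₀ s₁; omega)
          _ ≤ 2 * Nat.log 2 (Nat.size M) + C := hK₁
          _ ≤ 2 * (Nat.sqrt (Nat.size M) + 1) + C := by
              have := log_le_sqrt_succ (Nat.size M); omega
    have hfired := nF_succ_of_cond hcond
    have := h (t + 1)
    omega

/-- The enumeration. -/
def AFun (K : ℕ → ℕ → ℕ) (C : ℕ) (s x : ℕ) : Bool := decide (x < nF K C s)

lemma cKs_nonneg (K : ℕ → ℕ → ℕ) (x s : ℕ) : 0 ≤ cKs K x s :=
  Finset.sum_nonneg fun _ _ => pow_nonneg (by norm_num) _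

lemma stageCostR_nonneg (K : ℕ → ℕ → ℕ) (A : ℕ → ℕ → Bool) (s : ℕ) :
    0 ≤ stageCostR (cKs K) A s := by
  rw [stageCostR]
  split
  · exact cKs_nonneg _ _ _
  · exact le_rfl

lemma cost_fire {s : ℕ} (h : Cond K C s) :
    ((2:ℝ)⁻¹) ^ (2 * (Nat.sqrt (Nat.size (nF K C s)) + 1) + C)
      ≤ stageCostR (cKs K) (AFun K C) (s+1) := by
  obtain ⟨hj, he⟩ := inv K C s
  set m := nF K C s with hm
  have hms : m < 2 ^ Nat.size m := Nat.lt_size_self m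
  have h1 : 2 ^ Nat.size m < s + 1 := by
    have := h.1; rw [he] at this; exact this
  have hnext : nF K C (s+1) = m + 1 := nF_succ_of_cond h
  have hex : ∃ x, x < s + 1 ∧ AFun K C ((s+1) - 1) x ≠ AFun K C (s+1) x := by
    refine ⟨m, by omega, ?_⟩
    simp [AFun, hnext, ← hm]
  rw [stageCostR, dif_pos hex]
  have hfind : Nat.find hex = m := by
    rw [Nat.find_eq_iff]
    refine ⟨⟨by omega, by simp [AFun, hnext, ← hm]⟩, ?_⟩
    intro x hx
    simp only [not_and, ne_eq, not_not]
    intro _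
    have hxm : x < m := hx
    simp only [Nat.add_sub_cancel, AFun, hnext]
    have h1 : x < nF K C s := by omega
    have h2 : x < m + 1 := by omega
    simp [h1, h2]
  rw [hfind]
  have hmem : 2 ^ Nat.size m ∈ Finset.Ico (m+1) (s+1) :=
    Finset.mem_Ico.mpr ⟨by omega, h1⟩
  have hKle : K (s+1) (2 ^ Nat.size m) ≤ 2 * (Nat.sqrt (Nat.size m) + 1) + C := by
    have := h.2; rw [he, hj] at this; exact this
  calc ((2:ℝ)⁻¹) ^ (2 * (Nat.sqrt (Nat.size m) + 1) + C)
      ≤ ((2:ℝ)⁻¹) ^ (K (s+1) (2 ^ Nat.size m)) :=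
        pow_le_pow_of_le_one (by norm_num) (by norm_num) hKle
    _ ≤ cKs K m (s+1) := by
        rw [cKs]
        exact Finset.single_le_sum (f := fun w => ((2:ℝ)⁻¹) ^ K (s+1) w)
          (fun w _ => pow_nonneg (by norm_num) _) hmem

lemma accum (K : ℕ → ℕ → ℕ) (C : ℕ) (N : ℕ) :
    ∑ m ∈ Finset.range (nF K C N), ((2:ℝ)⁻¹) ^ (2 * (Nat.sqrt (Nat.size m) + 1) + C)
      ≤ ∑ s ∈ Finset.range (N+1), stageCostR (cKs K) (AFun K C) s := by
  induction N with
  | zero =>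
    have : nF K C 0 = 0 := rfl
    rw [this]
    simp only [Finset.range_zero, Finset.sum_empty]
    exact Finset.sum_nonneg fun s _ => stageCostR_nonneg K _ s
  | succ N ih =>
    rw [Finset.sum_range_succ (n := N+1)]
    by_cases h : Cond K C N
    · rw [nF_succ_of_cond h, Finset.sum_range_succ]
      exact add_le_add ih (cost_fire h)
    · rw [nF_succ_of_not_cond h]
      have := stageCostR_nonneg K (AFun K C) (N+1)
      linarith

end Stmt5Aux

open Stmt5Aux

/-- There is a computable enumeration of `ℕ` in order (each stage
an initial segment of `ℕ`) whose total `c_K`-cost is infinite.  Here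
`K : ℕ → ℕ → ℕ` is the stage-wise prefix-free complexity: computable,
non-increasing in the stage (on its domain `w < s`), and satisfying
`K(2^j) ≤ 2 log j + O(1)`. -/
theorem stmt5 (K : ℕ → ℕ → ℕ) (hK : Computable₂ K)
    (hmono : ∀ s w, w < s → K (s + 1) w ≤ K s w)
    (hgrow : ∃ C, ∀ j, ∃ s, 2 ^ j < s ∧ K s (2 ^ j) ≤ 2 * Nat.log 2 j + C) :
    ∃ A : ℕ → ℕ → Bool, Computable₂ A ∧
      (∀ s, ∃ n, ∀ x, A s x = decide (x < n)) ∧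
      (∀ s x, A s x = true → A (s + 1) x = true) ∧
      (∀ x, ∃ N, ∀ s, N ≤ s → A s x = true) ∧
      ∀ q : ℝ, ∃ n, q < ∑ s ∈ Finset.range n, stageCostR (cKs K) A s := by
  obtain ⟨C, hC⟩ := hgrow
  refine ⟨AFun K C, ?_, ?_, ?_, ?_, ?_⟩
  · -- computability
    have hn : Computable (nF K C) := Computable.fst.comp (enumP_computable K C hK)
    have hlt : Computable₂ fun (a b : ℕ) => decide (a < b) := Primrec.nat_lt.decide.to_comp
    have : Computable fun p : ℕ × ℕ => decide (p.2 < nF K C p.1) :=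
      hlt.comp Computable.snd (hn.comp Computable.fst)
    exact this.to₂
  · exact fun s => ⟨nF K C s, fun x => rfl⟩
  · intro s x hx
    have h1 : x < nF K C s := of_decide_eq_true hx
    have h2 : nF K C s ≤ nF K C (s+1) := nF_mono K C (Nat.le_succ s)
    exact decide_eq_true (by omega)
  · intro x
    obtain ⟨N, hN⟩ := nF_unbounded hmono hC (x + 1)
    refine ⟨N, fun s hs => ?_⟩
    have := nF_mono K C hs
    exact decide_eq_true (by omega)
  · intro q
    obtain ⟨n₀, hn₀⟩ := exists_nat_gt q
    set Kk := n₀ + C + 3 with hKk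
    set J1 := Kk * Kk - 1 with hJ1
    have hKk3 : 3 ≤ Kk := by omega
    have hKKge : 3 * Kk ≤ Kk * Kk := Nat.mul_le_mul_right Kk hKk3
    have hJeq : J1 + 1 = Kk * Kk := by omega
    have hsqJ : Nat.sqrt (J1 + 1) = Kk := by rw [hJeq]; exact Nat.sqrt_eq Kk
    obtain ⟨s, hs⟩ := nF_unbounded hmono hC (2 ^ (J1 + 1))
    refine ⟨s + 1, ?_⟩
    have hacc := accum K C s
    -- the block [2^J1, 2^(J1+1)) is inside range (nF K C s)
    have hsub : Finset.Ico (2 ^ J1) (2 ^ (J1 + 1)) ⊆ Finset.range (nF K C s) := by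
      intro m hm
      rw [Finset.mem_Ico] at hm
      rw [Finset.mem_range]
      omega
    have hblocksub : ∑ m ∈ Finset.Ico (2 ^ J1) (2 ^ (J1 + 1)),
          ((2:ℝ)⁻¹) ^ (2 * (Nat.sqrt (Nat.size m) + 1) + C)
        ≤ ∑ m ∈ Finset.range (nF K C s),
          ((2:ℝ)⁻¹) ^ (2 * (Nat.sqrt (Nat.size m) + 1) + C) :=
      Finset.sum_le_sum_of_subset_of_nonneg hsub
        (fun _ _ _ => pow_nonneg (by norm_num) _)
    have hsize : ∀ m ∈ Finset.Ico (2 ^ J1) (2 ^ (J1 + 1)), Nat.size m = J1 + 1 := by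
      intro m hm
      rw [Finset.mem_Ico] at hm
      refine le_antisymm (Nat.size_le.mpr hm.2) ?_
      have : J1 < Nat.size m := Nat.lt_size.mpr hm.1
      omega
    have hconstsum : ∑ m ∈ Finset.Ico (2 ^ J1) (2 ^ (J1 + 1)),
          ((2:ℝ)⁻¹) ^ (2 * (Nat.sqrt (Nat.size m) + 1) + C)
        = (2 ^ J1 : ℝ) * ((2:ℝ)⁻¹) ^ (2 * (Kk + 1) + C) := by
      rw [Finset.sum_congr rfl (fun m hm => by rw [hsize m hm, hsqJ])]
      rw [Finset.sum_const, Nat.card_Ico, nsmul_eq_mul]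
      have hcard : 2 ^ (J1 + 1) - 2 ^ J1 = 2 ^ J1 := by
        have : (2:ℕ) ^ (J1 + 1) = 2 ^ J1 * 2 := pow_succ 2 J1
        omega
      rw [hcard]
      push_cast
      ring
    -- now the numeric estimate
    set T := 2 * (Kk + 1) + C with hT
    have hexp : T + n₀ ≤ J1 := by
      have : 2 * Kk + 2 + C + n₀ ≤ Kk * Kk - 1 := by omega
      omega
    have hval : (n₀ : ℝ) < (2 ^ J1 : ℝ) * ((2:ℝ)⁻¹) ^ T := by
      have h2 : (2 ^ J1 : ℝ) * ((2:ℝ)⁻¹) ^ T = (2:ℝ) ^ (J1 - T) := by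
        have hJs : J1 = (J1 - T) + T := by omega
        rw [hJs, pow_add, mul_assoc, ← mul_pow]
        norm_num
      rw [h2]
      have h3 : (2:ℝ) ^ n₀ ≤ (2:ℝ) ^ (J1 - T) :=
        pow_le_pow_right₀ (by norm_num) (by omega)
      have h4 : (n₀ : ℝ) < (2:ℝ) ^ n₀ := by
        exact_mod_cast (Nat.lt_two_pow_self (n := n₀))
      linarith
    calc q < (n₀ : ℝ) := hn₀
      _ < (2 ^ J1 : ℝ) * ((2:ℝ)⁻¹) ^ T := hval
      _ = ∑ m ∈ Finset.Ico (2 ^ J1) (2 ^ (J1 + 1)),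
            ((2:ℝ)⁻¹) ^ (2 * (Nat.sqrt (Nat.size m) + 1) + C) := (hconstsum).symm
      _ ≤ ∑ m ∈ Finset.range (nF K C s),
            ((2:ℝ)⁻¹) ^ (2 * (Nat.sqrt (Nat.size m) + 1) + C) := hblocksub
      _ ≤ ∑ s' ∈ Finset.range (s + 1), stageCostR (cKs K) (AFun K C) s' := hacc
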